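/- For s ≥ 3, a countable K_s-free graph Γ is a universal homogeneous K_s-free graph if and only if for any two disjoint finite subsets U, W of vertices such that the induced subgraph on U is K_{s-1}-free, there exists a vertex v joined to all vertices of U and to no vertex of W. -/

import Mathlib

/-- Every finite K_s-free graph embeds into G as an induced subgraph. -/
def IsUniversalKFree (s : ℕ) (G : SimpleGraph ℕ) : Prop :=
  ∀ (n : ℕ) (γ : SimpleGraph (Fin n)), γ.CliqueFree s → Nonempty (γ ↪g G)

/-- Every isomorphism between finite induced subgraphs extends to an automorphism. -/
def IsHomogeneous (G : SimpleGraph ℕ) : Prop :=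
  ∀ (A B : Finset ℕ) (φ : {x // x ∈ A} ≃ {x // x ∈ B}),
    (∀ a a' : {x // x ∈ A}, G.Adj ↑a ↑a' ↔ G.Adj ↑(φ a) ↑(φ a')) →
    ∃ g : G ≃g G, ∀ a : {x // x ∈ A}, g ↑a = ↑(φ a)

set_option linter.unusedSectionVars false

open SimpleGraph

/-- Build an embedding of the complete graph from an injective map with adjacent images. -/
def topEmb {α : Type*} (V : SimpleGraph α) {n : ℕ} (f : Fin n → α)
    (hinj : Function.Injective f) (hadj : ∀ i j, i ≠ j → V.Adj (f i) (f j)) :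
    (⊤ : SimpleGraph (Fin n)) ↪g V :=
  ⟨⟨f, hinj⟩, by
    intro i j
    simp only [Function.Embedding.coeFn_mk, top_adj]
    exact ⟨fun h => fun e => V.irrefl (e ▸ h), fun h => hadj i j h⟩⟩

/-- If all vertices of U map injectively, adjacency-preservingly, into a K_s-free graph K
with all images adjacent to a common vertex n, then induce U G is K_{s-1}-free. -/
lemma induce_cf {α : Type*} (K : SimpleGraph α) {s : ℕ} (hs : 1 ≤ s) (hK : K.CliqueFree s)
    (nα : α) (U : Finset ℕ) (G : SimpleGraph ℕ) (g : ℕ → α)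
    (hinj : ∀ x ∈ U, ∀ y ∈ U, g x = g y → x = y)
    (hadj : ∀ x ∈ U, ∀ y ∈ U, G.Adj x y → K.Adj (g x) (g y))
    (hn : ∀ x ∈ U, K.Adj nα (g x)) :
    (SimpleGraph.induce (↑U : Set ℕ) G).CliqueFree (s - 1) := by
  obtain ⟨m, rfl⟩ := Nat.exists_eq_add_of_le hs
  have hm : 1 + m - 1 = m := by omega
  rw [hm, cliqueFree_iff]
  constructor
  intro h
  have hmem : ∀ i : Fin m, (↑(h i) : ℕ) ∈ U := fun i => (h i).2
  have hK' := cliqueFree_iff.mp hK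
  have : 1 + m = m + 1 := by omega
  rw [this] at hK'
  exact hK'.false <| Embedding.toCopy <| topEmb K (Fin.lastCases nα (fun i => g ↑(h i)))
    (by
      intro i j hij
      induction i using Fin.lastCases with
      | last =>
        induction j using Fin.lastCases with
        | last => rfl
        | cast j =>
          exfalso
          simp only [Fin.lastCases_last, Fin.lastCases_castSucc] at hij
          exact (hn _ (hmem j)).ne hij
      | cast i =>
        induction j using Fin.lastCases with
        | last =>
          exfalso
          simp only [Fin.lastCases_last, Fin.lastCases_castSucc] at hij
          exact (hn _ (hmem i)).ne hij.symm
        | cast j =>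
          simp only [Fin.lastCases_castSucc] at hij
          have : (↑(h i) : ℕ) = ↑(h j) := hinj _ (hmem i) _ (hmem j) hij
          have : h i = h j := Subtype.ext this
          have : i = j := h.injective this
          rw [this])
    (by
      intro i j hij
      induction i using Fin.lastCases with
      | last =>
        induction j using Fin.lastCases with
        | last => exact absurd rfl hij
        | cast j =>
          simp only [Fin.lastCases_last, Fin.lastCases_castSucc]
          exact hn _ (hmem j)
      | cast i =>
        induction j using Fin.lastCases with
        | last =>
          simp only [Fin.lastCases_last, Fin.lastCases_castSucc]
          exact (hn _ (hmem i)).symm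
        | cast j =>
          simp only [Fin.lastCases_castSucc]
          have hij' : i ≠ j := fun e => hij (by rw [e])
          have : (⊤ : SimpleGraph (Fin m)).Adj i j := hij'
          have := h.toHom.map_adj this
          exact hadj _ (hmem i) _ (hmem j) this)


section PartIso
variable {s : ℕ} (G : SimpleGraph ℕ)

def Good (p : Finset ℕ × (ℕ → ℕ)) : Prop :=
  (∀ a ∈ p.1, ∀ b ∈ p.1, p.2 a = p.2 b → a = b) ∧
  (∀ a ∈ p.1, ∀ b ∈ p.1, (G.Adj a b ↔ G.Adj (p.2 a) (p.2 b)))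

def PLe (p q : Finset ℕ × (ℕ → ℕ)) : Prop :=
  p.1 ⊆ q.1 ∧ ∀ a ∈ p.1, q.2 a = p.2 a

lemma PLe.refl (p : Finset ℕ × (ℕ → ℕ)) : PLe p p := ⟨le_refl _, fun _ _ => rfl⟩

lemma PLe.trans {p q r : Finset ℕ × (ℕ → ℕ)} (h1 : PLe p q) (h2 : PLe q r) : PLe p r :=
  ⟨h1.1.trans h2.1, fun a ha => (h2.2 a (h1.1 ha)).trans (h1.2 a ha)⟩

variable (hs : 3 ≤ s) (hG : G.CliqueFree s)
variable (Hext : ∀ U W : Finset ℕ, Disjoint U W →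
        (SimpleGraph.induce (↑U : Set ℕ) G).CliqueFree (s - 1) →
        ∃ v : ℕ, v ∉ U ∧ v ∉ W ∧ (∀ u ∈ U, G.Adj v u) ∧ (∀ w ∈ W, ¬ G.Adj v w))

include hs hG Hext in
lemma extend_point (A : Finset ℕ) (f : ℕ → ℕ)
    (hinj : ∀ a ∈ A, ∀ b ∈ A, f a = f b → a = b)
    (hadj : ∀ a ∈ A, ∀ b ∈ A, (G.Adj a b ↔ G.Adj (f a) (f b)))
    (n : ℕ) :
    ∃ v, v ∉ A.image f ∧ (∀ a ∈ A, (G.Adj n a ↔ G.Adj v (f a))) := by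
  classical
  set U : Finset ℕ := (A.filter (fun a => G.Adj n a)).image f with hU
  set W : Finset ℕ := (A.filter (fun a => ¬ G.Adj n a)).image f with hW
  have hUW : Disjoint U W := by
    rw [Finset.disjoint_left]
    rintro x hx hx'
    simp only [hU, hW, Finset.mem_image, Finset.mem_filter] at hx hx'
    obtain ⟨a, ⟨ha, hna⟩, rfl⟩ := hx
    obtain ⟨b, ⟨hb, hnb⟩, hfb⟩ := hx'
    exact hnb ((hinj b hb a ha hfb) ▸ hna)
  -- the partial inverse
  set g : ℕ → ℕ := Function.invFunOn f ↑A with hg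
  have hginv : ∀ x ∈ U, g x ∈ A ∧ f (g x) = x ∧ G.Adj n (g x) := by
    intro x hx
    simp only [hU, Finset.mem_image, Finset.mem_filter] at hx
    obtain ⟨a, ⟨ha, hna⟩, rfl⟩ := hx
    have hex : ∃ a' ∈ (↑A : Set ℕ), f a' = f a := ⟨a, ha, rfl⟩
    have h1 : g (f a) ∈ A := Function.invFunOn_mem hex
    have h2 : f (g (f a)) = f a := Function.invFunOn_eq hex
    have h3 : g (f a) = a := hinj _ h1 _ ha h2
    exact ⟨h1, h2, by rw [h3]; exact hna⟩
  have hcf : (SimpleGraph.induce (↑U : Set ℕ) G).CliqueFree (s - 1) := by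
    refine induce_cf G (by omega) hG n U G g ?_ ?_ ?_
    · intro x hx y hy hgxy
      have h1 := hginv x hx; have h2 := hginv y hy
      rw [← h1.2.1, ← h2.2.1, hgxy]
    · intro x hx y hy hxy
      have h1 := hginv x hx; have h2 := hginv y hy
      refine (hadj _ h1.1 _ h2.1).mpr ?_
      rw [h1.2.1, h2.2.1]; exact hxy
    · intro x hx
      exact (hginv x hx).2.2
  obtain ⟨v, hvU, hvW, hvadj, hvnadj⟩ := Hext U W hUW hcf
  refine ⟨v, ?_, ?_⟩
  · intro hv
    simp only [Finset.mem_image] at hv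
    obtain ⟨a, ha, rfl⟩ := hv
    by_cases hna : G.Adj n a
    · exact hvU (Finset.mem_image.mpr ⟨a, Finset.mem_filter.mpr ⟨ha, hna⟩, rfl⟩)
    · exact hvW (Finset.mem_image.mpr ⟨a, Finset.mem_filter.mpr ⟨ha, hna⟩, rfl⟩)
  · intro a ha
    constructor
    · intro hna
      exact hvadj _ (Finset.mem_image.mpr ⟨a, Finset.mem_filter.mpr ⟨ha, hna⟩, rfl⟩)
    · intro hva
      by_contra hna
      exact hvnadj _ (Finset.mem_image.mpr ⟨a, Finset.mem_filter.mpr ⟨ha, hna⟩, rfl⟩) hva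

include hs hG Hext in
lemma extend_dom (p : Finset ℕ × (ℕ → ℕ)) (hp : Good G p) (n : ℕ) :
    ∃ q, Good G q ∧ PLe p q ∧ n ∈ q.1 := by
  classical
  obtain ⟨A, f⟩ := p
  by_cases hn : n ∈ A
  · exact ⟨(A, f), hp, PLe.refl _, hn⟩
  obtain ⟨v, hv1, hv2⟩ := extend_point G hs hG Hext A f hp.1 hp.2 n
  set f' : ℕ → ℕ := Function.update f n v with hf'
  have hfeq : ∀ a ∈ A, f' a = f a := by
    intro a ha
    have hane : a ≠ n := fun h => hn (h ▸ ha)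
    exact Function.update_of_ne hane _ _
  have hfn : f' n = v := Function.update_self _ _ _
  refine ⟨(insert n A, f'), ⟨?_, ?_⟩, ⟨Finset.subset_insert _ _, hfeq⟩, Finset.mem_insert_self _ _⟩
  · intro a ha b hb hab
    simp only [Finset.mem_insert] at ha hb
    dsimp only at hab
    rcases ha with rfl | ha <;> rcases hb with rfl | hb
    · rfl
    · exfalso
      rw [hfn, hfeq b hb] at hab
      exact hv1 (Finset.mem_image.mpr ⟨b, hb, hab.symm⟩)
    · exfalso
      rw [hfn, hfeq a ha] at hab
      exact hv1 (Finset.mem_image.mpr ⟨a, ha, hab⟩)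
    · rw [hfeq a ha, hfeq b hb] at hab
      exact hp.1 a ha b hb hab
  · intro a ha b hb
    simp only [Finset.mem_insert] at ha hb
    dsimp only
    rcases ha with rfl | ha <;> rcases hb with rfl | hb
    · simp [G.irrefl]
    · rw [hfn, hfeq b hb]
      exact hv2 b hb
    · rw [hfn, hfeq a ha, G.adj_comm, G.adj_comm (f a) v]
      exact hv2 a ha
    · rw [hfeq a ha, hfeq b hb]
      exact hp.2 a ha b hb

include hs hG Hext in
lemma extend_ran (p : Finset ℕ × (ℕ → ℕ)) (hp : Good G p) (k : ℕ) :
    ∃ q, Good G q ∧ PLe p q ∧ k ∈ q.1.image q.2 := by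
  classical
  obtain ⟨A, f⟩ := p
  by_cases hk : k ∈ A.image f
  · exact ⟨(A, f), hp, PLe.refl _, hk⟩
  set B : Finset ℕ := A.image f with hB
  set g : ℕ → ℕ := Function.invFunOn f ↑A with hg
  have hginv : ∀ x ∈ B, g x ∈ A ∧ f (g x) = x := by
    intro x hx
    simp only [hB, Finset.mem_image] at hx
    obtain ⟨a, ha, rfl⟩ := hx
    have hex : ∃ a' ∈ (↑A : Set ℕ), f a' = f a := ⟨a, ha, rfl⟩
    exact ⟨Function.invFunOn_mem hex, Function.invFunOn_eq hex⟩
  have hgf : ∀ a ∈ A, g (f a) = a := by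
    intro a ha
    have h := hginv (f a) (Finset.mem_image.mpr ⟨a, ha, rfl⟩)
    exact hp.1 _ h.1 _ ha h.2
  have hBg : Good G (B, g) := by
    constructor
    · intro x hx y hy hxy
      dsimp only at hxy
      rw [← (hginv x hx).2, ← (hginv y hy).2, hxy]
    · intro x hx y hy
      have h1 := hginv x hx; have h2 := hginv y hy
      dsimp only
      conv_lhs => rw [← h1.2, ← h2.2]
      exact (hp.2 _ h1.1 _ h2.1).symm
  obtain ⟨w, hw1, hw2⟩ := extend_point G hs hG Hext B g hBg.1 hBg.2 k
  have hwA : w ∉ A := by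
    intro hwA
    refine hw1 (Finset.mem_image.mpr ⟨f w, Finset.mem_image.mpr ⟨w, hwA, rfl⟩, hgf w hwA⟩)
  set f' : ℕ → ℕ := Function.update f w k with hf'
  have hfeq : ∀ a ∈ A, f' a = f a := by
    intro a ha
    have hane : a ≠ w := fun h => hwA (h ▸ ha)
    exact Function.update_of_ne hane _ _
  have hfw : f' w = k := Function.update_self _ _ _
  have hadj' : ∀ a ∈ A, (G.Adj w a ↔ G.Adj k (f a)) := by
    intro a ha
    have hb : f a ∈ B := Finset.mem_image.mpr ⟨a, ha, rfl⟩
    rw [hw2 (f a) hb, hgf a ha]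
  refine ⟨(insert w A, f'), ⟨?_, ?_⟩, ⟨Finset.subset_insert _ _, hfeq⟩,
    Finset.mem_image.mpr ⟨w, Finset.mem_insert_self _ _, hfw⟩⟩
  · intro a ha b hb hab
    simp only [Finset.mem_insert] at ha hb
    dsimp only at hab
    rcases ha with rfl | ha <;> rcases hb with rfl | hb
    · rfl
    · exfalso
      rw [hfw, hfeq b hb] at hab
      exact hk (hab ▸ Finset.mem_image.mpr ⟨b, hb, rfl⟩)
    · exfalso
      rw [hfw, hfeq a ha] at hab
      exact hk (hab ▸ Finset.mem_image.mpr ⟨a, ha, rfl⟩)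
    · rw [hfeq a ha, hfeq b hb] at hab
      exact hp.1 a ha b hb hab
  · intro a ha b hb
    simp only [Finset.mem_insert] at ha hb
    dsimp only
    rcases ha with rfl | ha <;> rcases hb with rfl | hb
    · simp [G.irrefl]
    · rw [hfw, hfeq b hb]
      exact hadj' b hb
    · rw [hfw, hfeq a ha]
      exact ⟨fun h => ((hadj' a ha).mp h.symm).symm, fun h => ((hadj' a ha).mpr h.symm).symm⟩
    · rw [hfeq a ha, hfeq b hb]
      exact hp.2 a ha b hb

include hs hG Hext in
lemma chain_auto (p₀ : Finset ℕ × (ℕ → ℕ)) (h₀ : Good G p₀) :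
    ∃ g : G ≃g G, ∀ a ∈ p₀.1, g a = p₀.2 a := by
  classical
  have step : ∀ (p : Finset ℕ × (ℕ → ℕ)), Good G p → ∀ k : ℕ,
      ∃ q, Good G q ∧ PLe p q ∧ k ∈ q.1 ∧ k ∈ q.1.image q.2 := by
    intro p hp k
    obtain ⟨q, hq, hpq, hkq⟩ := extend_dom G hs hG Hext p hp k
    obtain ⟨r, hr, hqr, hkr⟩ := extend_ran G hs hG Hext q hq k
    exact ⟨r, hr, hpq.trans hqr, hqr.1 hkq, hkr⟩
  choose st hst1 hst2 hst3 hst4 using step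
  let c : ℕ → {p : Finset ℕ × (ℕ → ℕ) // Good G p} := fun k =>
    Nat.rec ⟨p₀, h₀⟩ (fun k ih => ⟨st ih.1 ih.2 k, hst1 ih.1 ih.2 k⟩) k
  have hcs : ∀ k, (c (k+1)).1 = st (c k).1 (c k).2 k := fun k => rfl
  have hle : ∀ k, PLe (c k).1 (c (k+1)).1 := fun k => hst2 (c k).1 (c k).2 k
  have hmono : ∀ k l, k ≤ l → PLe (c k).1 (c l).1 := by
    intro k l hkl
    induction l with
    | zero => rw [Nat.le_zero.mp hkl]; exact PLe.refl _
    | succ l ih =>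
      rcases Nat.lt_or_ge k (l+1) with h | h
      · exact (ih (by omega)).trans (hle l)
      · have : k = l + 1 := by omega
        rw [this]; exact PLe.refl _
  have hdom : ∀ k, k ∈ (c (k+1)).1.1 := fun k => hst3 (c k).1 (c k).2 k
  have hran : ∀ k, k ∈ (c (k+1)).1.1.image (c (k+1)).1.2 := fun k => hst4 (c k).1 (c k).2 k
  set F : ℕ → ℕ := fun n => (c (n+1)).1.2 n with hF
  have hstab : ∀ n m, n + 1 ≤ m → (c m).1.2 n = F n := fun n m h =>
    (hmono (n+1) m h).2 n (hdom n)
  have hmem : ∀ n m, n + 1 ≤ m → n ∈ (c m).1.1 := fun n m h =>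
    (hmono (n+1) m h).1 (hdom n)
  have hinj : Function.Injective F := by
    intro n n' h
    set m := max (n+1) (n'+1) with hm
    have h1 : n + 1 ≤ m := le_max_left _ _
    have h2 : n' + 1 ≤ m := le_max_right _ _
    refine (c m).2.1 n (hmem n m h1) n' (hmem n' m h2) ?_
    rw [hstab n m h1, hstab n' m h2, h]
  have hsurj : Function.Surjective F := by
    intro k
    obtain ⟨a, ha, hak⟩ := Finset.mem_image.mp (hran k)
    refine ⟨a, ?_⟩
    set m := max (a+1) (k+1) with hm
    have h1 : a + 1 ≤ m := le_max_left _ _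
    have h2 : k + 1 ≤ m := le_max_right _ _
    rw [← hstab a m h1, (hmono (k+1) m h2).2 a ha, hak]
  have hadjF : ∀ n n', G.Adj n n' ↔ G.Adj (F n) (F n') := by
    intro n n'
    set m := max (n+1) (n'+1) with hm
    have h1 : n + 1 ≤ m := le_max_left _ _
    have h2 : n' + 1 ≤ m := le_max_right _ _
    rw [← hstab n m h1, ← hstab n' m h2]
    exact (c m).2.2 n (hmem n m h1) n' (hmem n' m h2)
  refine ⟨⟨Equiv.ofBijective F ⟨hinj, hsurj⟩, ?_⟩, ?_⟩
  · intro a b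
    exact (hadjF a b).symm
  · intro a ha
    show F a = p₀.2 a
    have h0 : (0:ℕ) ≤ a + 1 := by omega
    exact (hmono 0 (a+1) h0).2 a ha

include hs hG Hext in
lemma univ_aux : ∀ (n : ℕ) (γ : SimpleGraph (Fin n)), γ.CliqueFree s → Nonempty (γ ↪g G) := by
  classical
  intro n γ hγ
  have P : ∀ k, k ≤ n → ∃ e : Fin n → ℕ,
      (∀ i j : Fin n, (i:ℕ) < k → (j:ℕ) < k → e i = e j → i = j) ∧
      (∀ i j : Fin n, (i:ℕ) < k → (j:ℕ) < k → (γ.Adj i j ↔ G.Adj (e i) (e j))) := by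
    intro k
    induction k with
    | zero => exact fun _ => ⟨fun _ => 0, fun i j hi => by omega, fun i j hi => by omega⟩
    | succ k ih =>
      intro hkn
      obtain ⟨e, heinj, headj⟩ := ih (by omega)
      set x : Fin n := ⟨k, by omega⟩ with hx
      haveI : Nonempty (Fin n) := ⟨x⟩
      have hxval : (x : ℕ) = k := rfl
      set U : Finset ℕ := (Finset.univ.filter (fun i : Fin n => (i:ℕ) < k ∧ γ.Adj x i)).image e with hU
      set W : Finset ℕ := (Finset.univ.filter (fun i : Fin n => (i:ℕ) < k ∧ ¬ γ.Adj x i)).image e with hW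
      have hUmem : ∀ y, y ∈ U ↔ ∃ i : Fin n, (i:ℕ) < k ∧ γ.Adj x i ∧ e i = y := by
        intro y
        simp only [hU, Finset.mem_image, Finset.mem_filter, Finset.mem_univ, true_and]
        constructor
        · rintro ⟨i, ⟨h1, h2⟩, h3⟩; exact ⟨i, h1, h2, h3⟩
        · rintro ⟨i, h1, h2, h3⟩; exact ⟨i, ⟨h1, h2⟩, h3⟩
      have hWmem : ∀ y, y ∈ W ↔ ∃ i : Fin n, (i:ℕ) < k ∧ ¬ γ.Adj x i ∧ e i = y := by
        intro y
        simp only [hW, Finset.mem_image, Finset.mem_filter, Finset.mem_univ, true_and]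
        constructor
        · rintro ⟨i, ⟨h1, h2⟩, h3⟩; exact ⟨i, h1, h2, h3⟩
        · rintro ⟨i, h1, h2, h3⟩; exact ⟨i, ⟨h1, h2⟩, h3⟩
      have hUW : Disjoint U W := by
        rw [Finset.disjoint_left]
        intro y hy hy'
        obtain ⟨i, hi1, hi2, hi3⟩ := (hUmem y).mp hy
        obtain ⟨j, hj1, hj2, hj3⟩ := (hWmem y).mp hy'
        exact hj2 ((heinj j i hj1 hi1 (hj3.trans hi3.symm)) ▸ hi2)
      set g : ℕ → Fin n := Function.invFunOn e {i : Fin n | (i:ℕ) < k} with hg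
      have hginv : ∀ y ∈ U, ((g y : ℕ) < k ∧ e (g y) = y ∧ γ.Adj x (g y)) := by
        intro y hy
        obtain ⟨i, hi1, hi2, hi3⟩ := (hUmem y).mp hy
        have hex : ∃ i' ∈ {i : Fin n | (i:ℕ) < k}, e i' = y := ⟨i, hi1, hi3⟩
        have h1 : g y ∈ {i : Fin n | (i:ℕ) < k} := Function.invFunOn_mem hex
        have h2 : e (g y) = y := Function.invFunOn_eq hex
        have h3 : g y = i := heinj _ _ h1 hi1 (h2.trans hi3.symm)
        exact ⟨h1, h2, by rw [h3]; exact hi2⟩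
      have hcf : (SimpleGraph.induce (↑U : Set ℕ) G).CliqueFree (s - 1) := by
        refine induce_cf γ (by omega) hγ x U G g ?_ ?_ ?_
        · intro a ha b hb hab
          rw [← (hginv a ha).2.1, ← (hginv b hb).2.1, hab]
        · intro a ha b hb hab
          have h1 := hginv a ha; have h2 := hginv b hb
          refine (headj _ _ h1.1 h2.1).mpr ?_
          rw [h1.2.1, h2.2.1]; exact hab
        · exact fun a ha => (hginv a ha).2.2
      obtain ⟨v, hvU, hvW, hvadj, hvnadj⟩ := Hext U W hUW hcf
      have hclass : ∀ j : Fin n, (j:ℕ) < k → e j ≠ v := by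
        intro j hj hej
        by_cases hadj : γ.Adj x j
        · exact hvU (hej ▸ (hUmem (e j)).mpr ⟨j, hj, hadj, rfl⟩)
        · exact hvW (hej ▸ (hWmem (e j)).mpr ⟨j, hj, hadj, rfl⟩)
      set e' : Fin n → ℕ := Function.update e x v with he'
      have he'old : ∀ i : Fin n, (i:ℕ) < k → e' i = e i := by
        intro i hi
        have : i ≠ x := fun h => by rw [h, hxval] at hi; omega
        exact Function.update_of_ne this _ _
      have he'x : e' x = v := Function.update_self _ _ _
      have hlt : ∀ i : Fin n, (i:ℕ) < k + 1 → (i:ℕ) < k ∨ i = x := by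
        intro i hi
        rcases Nat.lt_or_ge (i:ℕ) k with h | h
        · exact Or.inl h
        · exact Or.inr (Fin.ext (by omega))
      refine ⟨e', ?_, ?_⟩
      · intro i j hi hj hij
        rcases hlt i hi with hi' | rfl <;> rcases hlt j hj with hj' | rfl
        · rw [he'old i hi', he'old j hj'] at hij
          exact heinj i j hi' hj' hij
        · rw [he'old i hi', he'x] at hij
          exact absurd hij (hclass i hi')
        · rw [he'old j hj', he'x] at hij
          exact absurd hij.symm (hclass j hj')
        · rfl
      · intro i j hi hj
        rcases hlt i hi with hi' | rfl <;> rcases hlt j hj with hj' | rfl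
        · rw [he'old i hi', he'old j hj']
          exact headj i j hi' hj'
        · rw [he'old i hi', he'x]
          constructor
          · intro h
            have := hvadj (e i) ((hUmem (e i)).mpr ⟨i, hi', h.symm, rfl⟩)
            exact (G.adj_comm _ _).mp this
          · intro h
            by_contra hni
            have := hvnadj (e i) ((hWmem (e i)).mpr ⟨i, hi', fun h' => hni h'.symm, rfl⟩)
            exact this ((G.adj_comm _ _).mp h)
        · rw [he'old j hj', he'x]
          constructor
          · intro h
            exact hvadj (e j) ((hUmem (e j)).mpr ⟨j, hj', h, rfl⟩)
          · intro h
            by_contra hni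
            exact hvnadj (e j) ((hWmem (e j)).mpr ⟨j, hj', hni, rfl⟩) h
        · simp [γ.irrefl, G.irrefl]
  obtain ⟨e, heinj, headj⟩ := P n (le_refl n)
  refine ⟨⟨⟨e, fun i j h => heinj i j i.isLt j.isLt h⟩, ?_⟩⟩
  intro i j
  exact (headj i j i.isLt j.isLt).symm

end PartIso

section Forward
variable {s : ℕ} (G : SimpleGraph ℕ) (hs : 3 ≤ s) (hG : G.CliqueFree s)

include hs hG in
lemma forward_dir (huniv : ∀ (n : ℕ) (γ : SimpleGraph (Fin n)), γ.CliqueFree s → Nonempty (γ ↪g G))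
    (hhom : ∀ (A B : Finset ℕ) (φ : {x // x ∈ A} ≃ {x // x ∈ B}),
      (∀ a a' : {x // x ∈ A}, G.Adj ↑a ↑a' ↔ G.Adj ↑(φ a) ↑(φ a')) →
      ∃ g : G ≃g G, ∀ a : {x // x ∈ A}, g ↑a = ↑(φ a))
    (U W : Finset ℕ) (hUW : Disjoint U W)
    (hcf : (SimpleGraph.induce (↑U : Set ℕ) G).CliqueFree (s - 1)) :
    ∃ v : ℕ, v ∉ U ∧ v ∉ W ∧ (∀ u ∈ U, G.Adj v u) ∧ (∀ w ∈ W, ¬ G.Adj v w) := by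
  classical
  set l : List ℕ := U.toList ++ W.toList with hl
  set n : ℕ := l.length with hn
  have hnodup : l.Nodup := by
    refine (Finset.nodup_toList U).append (Finset.nodup_toList W) ?_
    rw [List.disjoint_left]
    intro a ha ha'
    rw [Finset.mem_toList] at ha ha'
    exact (Finset.disjoint_left.mp hUW) ha ha'
  have hmeml : ∀ a, a ∈ l ↔ (a ∈ U ∨ a ∈ W) := by
    intro a
    simp [hl, Finset.mem_toList]
  set ι : Fin n → ℕ := fun i => l.get i with hι
  have hιinj : Function.Injective ι := List.nodup_iff_injective_get.mp hnodup
  have hιmem : ∀ i, ι i ∈ U ∨ ι i ∈ W := fun i => (hmeml _).mp (List.get_mem l i)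
  have hιsurj : ∀ a, (a ∈ U ∨ a ∈ W) → ∃ i, ι i = a := by
    intro a ha
    exact List.mem_iff_get.mp ((hmeml a).mpr ha)
  -- the finite graph γ on Fin (n+1)
  set r : Fin (n+1) → Fin (n+1) → Prop := fun i j =>
    (∃ hi : (i:ℕ) < n, ∃ hj : (j:ℕ) < n, G.Adj (ι ⟨i, hi⟩) (ι ⟨j, hj⟩)) ∨
    ((i:ℕ) = n ∧ ∃ hj : (j:ℕ) < n, ι ⟨j, hj⟩ ∈ U) with hr
  set γ : SimpleGraph (Fin (n+1)) := SimpleGraph.fromRel r with hγ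
  have hchar1 : ∀ i j : Fin n, (γ.Adj i.castSucc j.castSucc ↔ G.Adj (ι i) (ι j)) := by
    intro i j
    rw [hγ, SimpleGraph.fromRel_adj]
    constructor
    · rintro ⟨hne, h | h⟩
      · rcases h with ⟨hi, hj, hadj⟩ | ⟨hi, _⟩
        · have e1 : (⟨((i.castSucc : Fin (n+1)):ℕ), hi⟩ : Fin n) = i := Fin.ext rfl
          have e2 : (⟨((j.castSucc : Fin (n+1)):ℕ), hj⟩ : Fin n) = j := Fin.ext rfl
          rw [e1, e2] at hadj; exact hadj
        · exfalso; simp only [Fin.coe_castSucc] at hi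
          have := i.isLt; omega
      · rcases h with ⟨hj, hi, hadj⟩ | ⟨hj, _⟩
        · have e1 : (⟨((i.castSucc : Fin (n+1)):ℕ), hi⟩ : Fin n) = i := Fin.ext rfl
          have e2 : (⟨((j.castSucc : Fin (n+1)):ℕ), hj⟩ : Fin n) = j := Fin.ext rfl
          rw [e1, e2] at hadj; exact hadj.symm
        · exfalso; simp only [Fin.coe_castSucc] at hj
          have := j.isLt; omega
    · intro hadj
      refine ⟨?_, Or.inl (Or.inl ⟨i.isLt, j.isLt, ?_⟩)⟩
      · intro h
        have : i = j := Fin.castSucc_injective _ h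
        exact G.irrefl (this ▸ hadj)
      · have e1 : (⟨((i.castSucc : Fin (n+1)):ℕ), i.isLt⟩ : Fin n) = i := Fin.ext rfl
        have e2 : (⟨((j.castSucc : Fin (n+1)):ℕ), j.isLt⟩ : Fin n) = j := Fin.ext rfl
        rw [e1, e2]; exact hadj
  have hchar2 : ∀ j : Fin n, (γ.Adj (Fin.last n) j.castSucc ↔ ι j ∈ U) := by
    intro j
    rw [hγ, SimpleGraph.fromRel_adj]
    constructor
    · rintro ⟨hne, h | h⟩
      · rcases h with ⟨hi, _, _⟩ | ⟨_, hj, hmem⟩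
        · exfalso; simp only [Fin.val_last] at hi; omega
        · have e2 : (⟨(j.castSucc : ℕ), hj⟩ : Fin n) = j := Fin.ext rfl
          rw [e2] at hmem; exact hmem
      · rcases h with ⟨hi, hj, _⟩ | ⟨hi, _⟩
        · exfalso; simp only [Fin.val_last] at hj; omega
        · exfalso; simp only [Fin.coe_castSucc] at hi
          have := j.isLt; omega
    · intro hmem
      refine ⟨?_, Or.inl (Or.inr ⟨Fin.val_last n, j.isLt, ?_⟩)⟩
      · intro h
        have := j.castSucc_lt_last
        rw [← h] at this
        exact lt_irrefl _ this
      · have e2 : (⟨((j.castSucc : Fin (n+1)):ℕ), j.isLt⟩ : Fin n) = j := Fin.ext rfl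
        rw [e2]; exact hmem
  have hlastne : ∀ j : Fin n, Fin.last n ≠ j.castSucc := by
    intro j h
    have := j.castSucc_lt_last
    rw [← h] at this
    exact lt_irrefl _ this
  have hsplit : ∀ i : Fin (n+1), i = Fin.last n ∨ ∃ i' : Fin n, i = i'.castSucc := by
    intro i
    rcases Nat.lt_or_ge (i:ℕ) n with h | h
    · exact Or.inr ⟨⟨i, h⟩, Fin.ext rfl⟩
    · exact Or.inl (Fin.ext (by have := i.isLt; simp only [Fin.val_last]; omega))
  -- γ is K_s-free
  have hγcf : γ.CliqueFree s := by
    rw [SimpleGraph.cliqueFree_iff]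
    constructor
    intro h
    by_cases hex : ∃ i0, h i0 = Fin.last n
    · obtain ⟨i0, hi0⟩ := hex
      obtain ⟨m, rfl⟩ : ∃ m, s = m + 1 := ⟨s - 1, by omega⟩
      have hd : ∀ a : Fin (m+1), a ≠ i0 → ∃ i' : Fin n, h a = i'.castSucc ∧ ι i' ∈ U := by
        intro a ha
        rcases hsplit (h a) with h' | ⟨i', hi'⟩
        · exact absurd (h.injective (h'.trans hi0.symm)) ha
        · refine ⟨i', hi', ?_⟩
          have hadj : γ.Adj (h i0) (h a) := h.toHom.map_adj
            (by simp only [SimpleGraph.top_adj]; exact fun e => ha e.symm)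
          rw [hi0, hi'] at hadj
          exact (hchar2 i').mp hadj
      have hd' : ∀ a : Fin m, ∃ i' : Fin n, h (i0.succAbove a) = i'.castSucc ∧ ι i' ∈ U :=
        fun a => hd _ (Fin.succAbove_ne i0 a)
      choose d hd1 hd2 using hd'
      have hscf := SimpleGraph.cliqueFree_iff.mp hcf
      have hsub : m + 1 - 1 = m := by omega
      rw [hsub] at hscf
      refine hscf.false (Embedding.toCopy (topEmb _ (fun a : Fin m => (⟨ι (d a), hd2 a⟩ : (↑U : Set ℕ))) ?_ ?_))
      · intro a b hab
        have h1 : ι (d a) = ι (d b) := congrArg Subtype.val hab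
        have h2 : d a = d b := hιinj h1
        have h3 : h (i0.succAbove a) = h (i0.succAbove b) := by rw [hd1 a, hd1 b, h2]
        exact Fin.succAbove_right_injective (h.injective h3)
      · intro a b hab
        have hne : i0.succAbove a ≠ i0.succAbove b := fun e => hab (Fin.succAbove_right_injective e)
        have hadj : γ.Adj (h (i0.succAbove a)) (h (i0.succAbove b)) := h.toHom.map_adj
          (by simp only [SimpleGraph.top_adj]; exact hne)
        rw [hd1 a, hd1 b] at hadj
        have := (hchar1 _ _).mp hadj
        exact this
    · push_neg at hex
      have hd : ∀ a, ∃ i' : Fin n, h a = i'.castSucc := by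
        intro a
        rcases hsplit (h a) with h' | h'
        · exact absurd h' (hex a)
        · exact h'
      choose d hd using hd
      have hGcf := SimpleGraph.cliqueFree_iff.mp hG
      refine hGcf.false (Embedding.toCopy (topEmb G (fun a => ι (d a)) ?_ ?_))
      · intro a b hab
        have : d a = d b := hιinj hab
        have : h a = h b := by rw [hd a, hd b, this]
        exact h.injective this
      · intro a b hab
        have hadj : γ.Adj (h a) (h b) := h.toHom.map_adj (by simpa [SimpleGraph.top_adj] using hab)
        rw [hd a, hd b] at hadj
        exact (hchar1 _ _).mp hadj
  -- embed γ into G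
  obtain ⟨E⟩ := huniv (n+1) γ hγcf
  set ψ : Fin n → ℕ := fun i => E i.castSucc with hψ
  have hψinj : Function.Injective ψ := fun i j hij =>
    Fin.castSucc_injective _ (E.injective hij)
  set A' : Finset ℕ := Finset.image ψ Finset.univ with hA'
  set B' : Finset ℕ := U ∪ W with hB'
  have hgA : Function.Bijective (fun i : Fin n => (⟨ψ i, Finset.mem_image.mpr ⟨i, Finset.mem_univ i, rfl⟩⟩ : {x // x ∈ A'})) := by
    constructor
    · intro i j hij
      exact hψinj (congrArg Subtype.val hij)
    · rintro ⟨x, hx⟩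
      obtain ⟨i, _, rfl⟩ := Finset.mem_image.mp hx
      exact ⟨i, rfl⟩
  have hιB : ∀ i, ι i ∈ B' := by
    intro i
    rcases hιmem i with h | h
    · exact Finset.mem_union_left _ h
    · exact Finset.mem_union_right _ h
  have hgB : Function.Bijective (fun i : Fin n => (⟨ι i, hιB i⟩ : {x // x ∈ B'})) := by
    constructor
    · intro i j hij
      exact hιinj (congrArg Subtype.val hij)
    · rintro ⟨x, hx⟩
      rw [hB', Finset.mem_union] at hx
      obtain ⟨i, hi⟩ := hιsurj x hx
      exact ⟨i, Subtype.ext hi⟩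
  set eA := Equiv.ofBijective _ hgA with heA
  set eB := Equiv.ofBijective _ hgB with heB
  set φ : {x // x ∈ A'} ≃ {x // x ∈ B'} := eA.symm.trans eB with hφ
  have hφval : ∀ i : Fin n, (φ (eA i) : ℕ) = ι i := by
    intro i
    rw [hφ]
    simp only [Equiv.trans_apply, Equiv.symm_apply_apply]
    rfl
  have heAval : ∀ i : Fin n, ((eA i : {x // x ∈ A'}) : ℕ) = ψ i := fun i => rfl
  have hadjφ : ∀ a a' : {x // x ∈ A'}, G.Adj ↑a ↑a' ↔ G.Adj ↑(φ a) ↑(φ a') := by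
    intro a a'
    obtain ⟨i, rfl⟩ := eA.surjective a
    obtain ⟨j, rfl⟩ := eA.surjective a'
    rw [hφval i, hφval j, heAval i, heAval j]
    rw [hψ]
    rw [E.map_adj_iff]
    exact (hchar1 i j)
  obtain ⟨gaut, hgaut⟩ := hhom A' B' φ hadjφ
  have hgautψ : ∀ i : Fin n, gaut (ψ i) = ι i := by
    intro i
    have := hgaut (eA i)
    rw [heAval i, hφval i] at this
    exact this
  refine ⟨gaut (E (Fin.last n)), ?_, ?_, ?_, ?_⟩
  · intro hv
    obtain ⟨i, hi⟩ := hιsurj _ (Or.inl hv)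
    have : gaut (E (Fin.last n)) = gaut (ψ i) := by rw [hgautψ i, hi]
    have h2 : E (Fin.last n) = E i.castSucc := gaut.injective this
    exact hlastne i (E.injective h2)
  · intro hv
    obtain ⟨i, hi⟩ := hιsurj _ (Or.inr hv)
    have : gaut (E (Fin.last n)) = gaut (ψ i) := by rw [hgautψ i, hi]
    have h2 : E (Fin.last n) = E i.castSucc := gaut.injective this
    exact hlastne i (E.injective h2)
  · intro u hu
    obtain ⟨i, hi⟩ := hιsurj u (Or.inl hu)
    have h1 : γ.Adj (Fin.last n) i.castSucc := (hchar2 i).mpr (hi.symm ▸ hu)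
    have h2 : G.Adj (E (Fin.last n)) (ψ i) := E.map_adj_iff.mpr h1
    have h3 := gaut.map_adj_iff.mpr h2
    rw [hgautψ i, hi] at h3
    exact h3
  · intro w hw hadj
    obtain ⟨i, hi⟩ := hιsurj w (Or.inr hw)
    have hιU : ι i ∉ U := fun h => (Finset.disjoint_left.mp hUW) h (hi ▸ hw)
    have h1 : ¬ γ.Adj (Fin.last n) i.castSucc := fun h => hιU ((hchar2 i).mp h)
    refine h1 (E.map_adj_iff.mp ?_)
    show G.Adj (E (Fin.last n)) (ψ i)
    refine gaut.map_adj_iff.mp ?_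
    rw [hgautψ i, hi]
    exact hadj

end Forward

theorem ks_free_universality_criterion (s : ℕ) (hs : 3 ≤ s)
    (G : SimpleGraph ℕ) (hG : G.CliqueFree s) :
    (IsUniversalKFree s G ∧ IsHomogeneous G) ↔
      (∀ U W : Finset ℕ, Disjoint U W →
        (SimpleGraph.induce (↑U : Set ℕ) G).CliqueFree (s - 1) →
        ∃ v : ℕ, v ∉ U ∧ v ∉ W ∧ (∀ u ∈ U, G.Adj v u) ∧ (∀ w ∈ W, ¬ G.Adj v w)) := by
  classical
  constructor
  · rintro ⟨huniv, hhom⟩ U W hUW hcf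
    exact forward_dir G hs hG huniv hhom U W hUW hcf
  · intro Hext
    refine ⟨univ_aux G hs hG Hext, ?_⟩
    intro A B φ hφ
    set f₀ : ℕ → ℕ := fun a => if h : a ∈ A then (φ ⟨a, h⟩ : ℕ) else 0 with hf₀
    have hval : ∀ (a : ℕ) (ha : a ∈ A), f₀ a = (φ ⟨a, ha⟩ : ℕ) := by
      intro a ha
      simp only [hf₀, dif_pos ha]
    have hGood : Good G (A, f₀) := by
      constructor
      · intro a ha b hb hab
        dsimp only at hab
        rw [hval a ha, hval b hb] at hab
        have := φ.injective (Subtype.ext hab)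
        exact congrArg Subtype.val this
      · intro a ha b hb
        dsimp only
        rw [hval a ha, hval b hb]
        exact hφ ⟨a, ha⟩ ⟨b, hb⟩
    obtain ⟨g, hg⟩ := chain_auto G hs hG Hext (A, f₀) hGood
    refine ⟨g, fun a => ?_⟩
    have := hg ↑a a.2
    dsimp only at this
    rw [hval ↑a a.2] at this
    exact this
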